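/- Let R be an n×n real symmetric positive definite matrix, t ∈ ℝ, h ≥ 0, K : [0,∞) → ℝ a nonnegative function, g : ℝ → ℝ and ω : ℝ → ℝⁿ functions, such that all the double integrals below over the region {(θ,s) : θ ∈ [0,∞), s ∈ [t−θ−h, t]} (of K(θ), K(θ)g(s), K(θ)g(s)², K(θ)ω(s), K(θ)g(s)ω(s), and K(θ)ω(s)ᵀRω(s)) are well defined and finite, ∫_0^∞ ∫_{t−θ−h}^{t} K(θ)g(s) ds dθ = 0, ∫_0^∞ ∫_{t−θ−h}^{t} K(θ)g(s)² ds dθ > 0, and K_{1h} := ∫_0^∞ K(θ)(θ+h) dθ > 0. Then ∫_0^∞ ∫_{t−θ−h}^{t} K(θ) ω(s)ᵀ R ω(s) ds dθ ≥ K_{1h}⁻¹ (∫_0^∞ ∫_{t−θ−h}^{t} K(θ)ω(s) ds dθ)ᵀ R (∫_0^∞ ∫_{t−θ−h}^{t} K(θ)ω(s) ds dθ) + (∫_0^∞ ∫_{t−θ−h}^{t} K(θ)g(s)² ds dθ)⁻¹ Σᵀ R Σ, where Σ := ∫_0^∞ ∫_{t−θ−h}^{t} K(θ)g(s)ω(s)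 ds dθ. -/

import Mathlib

open MeasureTheory Matrix

section Aux

variable {n : ℕ}

private lemma symmQ (R : Matrix (Fin n) (Fin n) ℝ) (h : R.IsSymm) (x y : Fin n → ℝ) :
    x ⬝ᵥ R *ᵥ y = y ⬝ᵥ R *ᵥ x := by
  rw [Matrix.dotProduct_mulVec, ← Matrix.vecMul_transpose, h.eq, dotProduct_comm]

private lemma quad_expand (R : Matrix (Fin n) (Fin n) ℝ) (hR : R.IsSymm)
    (a b w : Fin n → ℝ) (k c : ℝ) :
    k * ((w - a - c • b) ⬝ᵥ R *ᵥ (w - a - c • b)) =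
      k * (w ⬝ᵥ R *ᵥ w) - 2 * ((k • w) ⬝ᵥ R *ᵥ a) - 2 * (((k * c) • w) ⬝ᵥ R *ᵥ b)
      + (a ⬝ᵥ R *ᵥ a) * k + (2 * (a ⬝ᵥ R *ᵥ b)) * (k * c) + (b ⬝ᵥ R *ᵥ b) * (k * c ^ 2) := by
  simp only [sub_dotProduct, smul_dotProduct, Matrix.mulVec_sub,
    Matrix.mulVec_smul, dotProduct_sub, dotProduct_smul, smul_eq_mul]
  rw [symmQ R hR a w, symmQ R hR b w, symmQ R hR b a]
  ring

/-- The continuous linear map `v ↦ v ⬝ᵥ R *ᵥ c`. -/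
private noncomputable def dRc (R : Matrix (Fin n) (Fin n) ℝ) (c : Fin n → ℝ) :
    (Fin n → ℝ) →L[ℝ] ℝ :=
  LinearMap.toContinuousLinearMap
    { toFun := fun v => v ⬝ᵥ R *ᵥ c
      map_add' := fun x y => add_dotProduct x y _
      map_smul' := fun r x => smul_dotProduct r x _ }

private lemma dRc_apply (R : Matrix (Fin n) (Fin n) ℝ) (c v : Fin n → ℝ) :
    dRc R c v = v ⬝ᵥ R *ᵥ c := rfl

end Aux

/-- Theorem 2: generalized double-integral Jensen inequality over an infinite
horizon.  The iterated integrals `∫_0^∞ ∫_{t-θ-h}^{t} (·) ds dθ` are taken with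
the inner variable `s` ranging in `[t-θ-h, t]` for each `θ ∈ [0,∞)`. -/
theorem extended_jensen_double_integral {n : ℕ}
    (R : Matrix (Fin n) (Fin n) ℝ) (hRsym : R.IsSymm) (hRpd : R.PosDef)
    (t h : ℝ) (hh : 0 ≤ h)
    (K : ℝ → ℝ) (g : ℝ → ℝ) (ω : ℝ → (Fin n → ℝ))
    (hKnonneg : ∀ θ ∈ Set.Ici (0 : ℝ), 0 ≤ K θ)
    -- inner integrability on [t-θ-h, t] for every θ ≥ 0
    (hK_in : ∀ θ ∈ Set.Ici (0 : ℝ),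
      IntegrableOn (fun _ : ℝ => K θ) (Set.Icc (t - θ - h) t))
    (hKg_in : ∀ θ ∈ Set.Ici (0 : ℝ),
      IntegrableOn (fun s => K θ * g s) (Set.Icc (t - θ - h) t))
    (hKg2_in : ∀ θ ∈ Set.Ici (0 : ℝ),
      IntegrableOn (fun s => K θ * (g s) ^ 2) (Set.Icc (t - θ - h) t))
    (hKω_in : ∀ θ ∈ Set.Ici (0 : ℝ),
      IntegrableOn (fun s => K θ • ω s) (Set.Icc (t - θ - h) t))
    (hKgω_in : ∀ θ ∈ Set.Ici (0 : ℝ),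
      IntegrableOn (fun s => (K θ * g s) • ω s) (Set.Icc (t - θ - h) t))
    (hKωRω_in : ∀ θ ∈ Set.Ici (0 : ℝ),
      IntegrableOn (fun s => K θ * (ω s ⬝ᵥ R.mulVec (ω s))) (Set.Icc (t - θ - h) t))
    -- outer integrability on [0,∞)
    (hK_out : IntegrableOn
      (fun θ => ∫ s in Set.Icc (t - θ - h) t, K θ) (Set.Ici (0 : ℝ)))
    (hKg_out : IntegrableOn
      (fun θ => ∫ s in Set.Icc (t - θ - h) t, K θ * g s) (Set.Ici (0 : ℝ)))
    (hKg2_out : IntegrableOn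
      (fun θ => ∫ s in Set.Icc (t - θ - h) t, K θ * (g s) ^ 2) (Set.Ici (0 : ℝ)))
    (hKω_out : IntegrableOn
      (fun θ => ∫ s in Set.Icc (t - θ - h) t, K θ • ω s) (Set.Ici (0 : ℝ)))
    (hKgω_out : IntegrableOn
      (fun θ => ∫ s in Set.Icc (t - θ - h) t, (K θ * g s) • ω s) (Set.Ici (0 : ℝ)))
    (hKωRω_out : IntegrableOn
      (fun θ => ∫ s in Set.Icc (t - θ - h) t, K θ * (ω s ⬝ᵥ R.mulVec (ω s)))
      (Set.Ici (0 : ℝ)))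
    (hK1h_int : IntegrableOn (fun θ => K θ * (θ + h)) (Set.Ici (0 : ℝ)))
    (hKg0 : ∫ θ in Set.Ici (0 : ℝ), ∫ s in Set.Icc (t - θ - h) t, K θ * g s = 0)
    (hKg2pos :
      0 < ∫ θ in Set.Ici (0 : ℝ), ∫ s in Set.Icc (t - θ - h) t, K θ * (g s) ^ 2)
    (hK1hpos : 0 < ∫ θ in Set.Ici (0 : ℝ), K θ * (θ + h)) :
    ∫ θ in Set.Ici (0 : ℝ), ∫ s in Set.Icc (t - θ - h) t,
        K θ * (ω s ⬝ᵥ R.mulVec (ω s)) ≥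
      (∫ θ in Set.Ici (0 : ℝ), K θ * (θ + h))⁻¹ *
        ((∫ θ in Set.Ici (0 : ℝ), ∫ s in Set.Icc (t - θ - h) t, K θ • ω s) ⬝ᵥ
          R.mulVec
            (∫ θ in Set.Ici (0 : ℝ), ∫ s in Set.Icc (t - θ - h) t, K θ • ω s)) +
      (∫ θ in Set.Ici (0 : ℝ), ∫ s in Set.Icc (t - θ - h) t, K θ * (g s) ^ 2)⁻¹ *
        ((∫ θ in Set.Ici (0 : ℝ),
            ∫ s in Set.Icc (t - θ - h) t, (K θ * g s) • ω s) ⬝ᵥ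
          R.mulVec
            (∫ θ in Set.Ici (0 : ℝ),
              ∫ s in Set.Icc (t - θ - h) t, (K θ * g s) • ω s)) := by
  set K1h : ℝ := ∫ θ in Set.Ici (0 : ℝ), K θ * (θ + h) with hK1h_def
  set G2 : ℝ := ∫ θ in Set.Ici (0 : ℝ), ∫ s in Set.Icc (t - θ - h) t, K θ * (g s) ^ 2
    with hG2_def
  set V : Fin n → ℝ := ∫ θ in Set.Ici (0 : ℝ), ∫ s in Set.Icc (t - θ - h) t, K θ • ω s
    with hV_def
  set Sg : Fin n → ℝ :=
    ∫ θ in Set.Ici (0 : ℝ), ∫ s in Set.Icc (t - θ - h) t, (K θ * g s) • ω s with hSg_def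
  set IR : ℝ := ∫ θ in Set.Ici (0 : ℝ), ∫ s in Set.Icc (t - θ - h) t,
    K θ * (ω s ⬝ᵥ R.mulVec (ω s)) with hIR_def
  set a : Fin n → ℝ := K1h⁻¹ • V with ha_def
  set b : Fin n → ℝ := G2⁻¹ • Sg with hb_def
  have hK1ne : K1h ≠ 0 := ne_of_gt hK1hpos
  have hG2ne : G2 ≠ 0 := ne_of_gt hKg2pos
  -- the inner integral of K·‖ω - a - g b‖²_R for each θ ≥ 0
  have inner_eq : ∀ θ ∈ Set.Ici (0 : ℝ),
      (∫ s in Set.Icc (t - θ - h) t,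
        K θ * ((ω s - a - g s • b) ⬝ᵥ R *ᵥ (ω s - a - g s • b)))
      = (∫ s in Set.Icc (t - θ - h) t, K θ * (ω s ⬝ᵥ R.mulVec (ω s)))
        - 2 * ((∫ s in Set.Icc (t - θ - h) t, K θ • ω s) ⬝ᵥ R *ᵥ a)
        - 2 * ((∫ s in Set.Icc (t - θ - h) t, (K θ * g s) • ω s) ⬝ᵥ R *ᵥ b)
        + (a ⬝ᵥ R *ᵥ a) * (∫ s in Set.Icc (t - θ - h) t, K θ)
        + (2 * (a ⬝ᵥ R *ᵥ b)) * (∫ s in Set.Icc (t - θ - h) t, K θ * g s)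
        + (b ⬝ᵥ R *ᵥ b) * (∫ s in Set.Icc (t - θ - h) t, K θ * (g s) ^ 2) := by
    intro θ hθ
    have i1 := hKωRω_in θ hθ
    have i2 : IntegrableOn (fun s => 2 * ((K θ • ω s) ⬝ᵥ R *ᵥ a))
        (Set.Icc (t - θ - h) t) :=
      ((dRc R a).integrable_comp (hKω_in θ hθ)).const_mul 2
    have i3 : IntegrableOn (fun s => 2 * (((K θ * g s) • ω s) ⬝ᵥ R *ᵥ b))
        (Set.Icc (t - θ - h) t) :=
      ((dRc R b).integrable_comp (hKgω_in θ hθ)).const_mul 2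
    have i4 : IntegrableOn (fun s : ℝ => (a ⬝ᵥ R *ᵥ a) * K θ)
        (Set.Icc (t - θ - h) t) := (hK_in θ hθ).const_mul _
    have i5 : IntegrableOn (fun s => (2 * (a ⬝ᵥ R *ᵥ b)) * (K θ * g s))
        (Set.Icc (t - θ - h) t) := (hKg_in θ hθ).const_mul _
    have i6 : IntegrableOn (fun s => (b ⬝ᵥ R *ᵥ b) * (K θ * (g s) ^ 2))
        (Set.Icc (t - θ - h) t) := (hKg2_in θ hθ).const_mul _
    have i12 : IntegrableOn (fun s => K θ * (ω s ⬝ᵥ R *ᵥ ω s)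
        - 2 * ((K θ • ω s) ⬝ᵥ R *ᵥ a)) (Set.Icc (t - θ - h) t) := i1.sub i2
    have i123 : IntegrableOn (fun s => K θ * (ω s ⬝ᵥ R *ᵥ ω s)
        - 2 * ((K θ • ω s) ⬝ᵥ R *ᵥ a) - 2 * (((K θ * g s) • ω s) ⬝ᵥ R *ᵥ b))
        (Set.Icc (t - θ - h) t) := i12.sub i3
    have i1234 : IntegrableOn (fun s => K θ * (ω s ⬝ᵥ R *ᵥ ω s)
        - 2 * ((K θ • ω s) ⬝ᵥ R *ᵥ a) - 2 * (((K θ * g s) • ω s) ⬝ᵥ R *ᵥ b)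
        + (a ⬝ᵥ R *ᵥ a) * K θ) (Set.Icc (t - θ - h) t) := i123.add i4
    have i12345 : IntegrableOn (fun s => K θ * (ω s ⬝ᵥ R *ᵥ ω s)
        - 2 * ((K θ • ω s) ⬝ᵥ R *ᵥ a) - 2 * (((K θ * g s) • ω s) ⬝ᵥ R *ᵥ b)
        + (a ⬝ᵥ R *ᵥ a) * K θ + (2 * (a ⬝ᵥ R *ᵥ b)) * (K θ * g s))
        (Set.Icc (t - θ - h) t) := i1234.add i5
    have e2 : (∫ s in Set.Icc (t - θ - h) t, 2 * ((K θ • ω s) ⬝ᵥ R *ᵥ a))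
        = 2 * ((∫ s in Set.Icc (t - θ - h) t, K θ • ω s) ⬝ᵥ R *ᵥ a) := by
      rw [integral_const_mul]
      congr 1
      exact (dRc R a).integral_comp_comm (hKω_in θ hθ)
    have e3 : (∫ s in Set.Icc (t - θ - h) t, 2 * (((K θ * g s) • ω s) ⬝ᵥ R *ᵥ b))
        = 2 * ((∫ s in Set.Icc (t - θ - h) t, (K θ * g s) • ω s) ⬝ᵥ R *ᵥ b) := by
      rw [integral_const_mul]
      congr 1
      exact (dRc R b).integral_comp_comm (hKgω_in θ hθ)
    have e4 : (∫ s in Set.Icc (t - θ - h) t, (a ⬝ᵥ R *ᵥ a) * K θ)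
        = (a ⬝ᵥ R *ᵥ a) * ∫ s in Set.Icc (t - θ - h) t, K θ := integral_const_mul _ _
    have e5 : (∫ s in Set.Icc (t - θ - h) t, (2 * (a ⬝ᵥ R *ᵥ b)) * (K θ * g s))
        = (2 * (a ⬝ᵥ R *ᵥ b)) * ∫ s in Set.Icc (t - θ - h) t, K θ * g s :=
      integral_const_mul _ _
    have e6 : (∫ s in Set.Icc (t - θ - h) t, (b ⬝ᵥ R *ᵥ b) * (K θ * (g s) ^ 2))
        = (b ⬝ᵥ R *ᵥ b) * ∫ s in Set.Icc (t - θ - h) t, K θ * (g s) ^ 2 :=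
      integral_const_mul _ _
    simp_rw [quad_expand R hRsym a b]
    rw [integral_add i12345 i6,
      integral_add i1234 i5,
      integral_add i123 i4,
      integral_sub i12 i3, integral_sub i1 i2, e2, e3, e4, e5, e6]
  -- ∫ θ in Ici 0, (∫ s, K θ) = K1h
  have hIK : Set.EqOn (fun θ => ∫ s in Set.Icc (t - θ - h) t, K θ)
      (fun θ => K θ * (θ + h)) (Set.Ici 0) := by
    intro θ hθ
    have hθ0 : (0:ℝ) ≤ θ := hθ
    simp only
    rw [setIntegral_const, Real.volume_real_Icc_of_le (by linarith), smul_eq_mul]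
    ring
  have hIK_int : ∫ θ in Set.Ici (0:ℝ), ∫ s in Set.Icc (t - θ - h) t, K θ = K1h := by
    rw [hK1h_def]
    exact setIntegral_congr_fun measurableSet_Ici hIK
  -- nonnegativity of the double integral of the quadratic form
  have h0 : 0 ≤ ∫ θ in Set.Ici (0 : ℝ), ∫ s in Set.Icc (t - θ - h) t,
      K θ * ((ω s - a - g s • b) ⬝ᵥ R *ᵥ (ω s - a - g s • b)) := by
    refine setIntegral_nonneg measurableSet_Ici fun θ hθ => ?_
    refine setIntegral_nonneg measurableSet_Icc fun s _ => ?_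
    exact mul_nonneg (hKnonneg θ hθ) (hRpd.posSemidef.dotProduct_mulVec_nonneg _)
  -- expand the outer integral
  have o2 : IntegrableOn
      (fun θ => 2 * ((∫ s in Set.Icc (t - θ - h) t, K θ • ω s) ⬝ᵥ R *ᵥ a))
      (Set.Ici (0:ℝ)) := ((dRc R a).integrable_comp hKω_out).const_mul 2
  have o3 : IntegrableOn
      (fun θ => 2 * ((∫ s in Set.Icc (t - θ - h) t, (K θ * g s) • ω s) ⬝ᵥ R *ᵥ b))
      (Set.Ici (0:ℝ)) := ((dRc R b).integrable_comp hKgω_out).const_mul 2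
  have o4 : IntegrableOn
      (fun θ => (a ⬝ᵥ R *ᵥ a) * (∫ s in Set.Icc (t - θ - h) t, K θ))
      (Set.Ici (0:ℝ)) := hK_out.const_mul _
  have o5 : IntegrableOn
      (fun θ => (2 * (a ⬝ᵥ R *ᵥ b)) * (∫ s in Set.Icc (t - θ - h) t, K θ * g s))
      (Set.Ici (0:ℝ)) := hKg_out.const_mul _
  have o6 : IntegrableOn
      (fun θ => (b ⬝ᵥ R *ᵥ b) * (∫ s in Set.Icc (t - θ - h) t, K θ * (g s) ^ 2))
      (Set.Ici (0:ℝ)) := hKg2_out.const_mul _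
  have key : (∫ θ in Set.Ici (0 : ℝ), ∫ s in Set.Icc (t - θ - h) t,
      K θ * ((ω s - a - g s • b) ⬝ᵥ R *ᵥ (ω s - a - g s • b)))
      = IR - 2 * (V ⬝ᵥ R *ᵥ a) - 2 * (Sg ⬝ᵥ R *ᵥ b)
        + (a ⬝ᵥ R *ᵥ a) * K1h + (2 * (a ⬝ᵥ R *ᵥ b)) * 0 + (b ⬝ᵥ R *ᵥ b) * G2 := by
    have o12 : IntegrableOn (fun θ =>
        (∫ s in Set.Icc (t - θ - h) t, K θ * (ω s ⬝ᵥ R.mulVec (ω s)))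
        - 2 * ((∫ s in Set.Icc (t - θ - h) t, K θ • ω s) ⬝ᵥ R *ᵥ a))
        (Set.Ici (0:ℝ)) := hKωRω_out.sub o2
    have o123 : IntegrableOn (fun θ =>
        (∫ s in Set.Icc (t - θ - h) t, K θ * (ω s ⬝ᵥ R.mulVec (ω s)))
        - 2 * ((∫ s in Set.Icc (t - θ - h) t, K θ • ω s) ⬝ᵥ R *ᵥ a)
        - 2 * ((∫ s in Set.Icc (t - θ - h) t, (K θ * g s) • ω s) ⬝ᵥ R *ᵥ b))
        (Set.Ici (0:ℝ)) := o12.sub o3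
    have o1234 : IntegrableOn (fun θ =>
        (∫ s in Set.Icc (t - θ - h) t, K θ * (ω s ⬝ᵥ R.mulVec (ω s)))
        - 2 * ((∫ s in Set.Icc (t - θ - h) t, K θ • ω s) ⬝ᵥ R *ᵥ a)
        - 2 * ((∫ s in Set.Icc (t - θ - h) t, (K θ * g s) • ω s) ⬝ᵥ R *ᵥ b)
        + (a ⬝ᵥ R *ᵥ a) * (∫ s in Set.Icc (t - θ - h) t, K θ))
        (Set.Ici (0:ℝ)) := o123.add o4
    have o12345 : IntegrableOn (fun θ =>
        (∫ s in Set.Icc (t - θ - h) t, K θ * (ω s ⬝ᵥ R.mulVec (ω s)))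
        - 2 * ((∫ s in Set.Icc (t - θ - h) t, K θ • ω s) ⬝ᵥ R *ᵥ a)
        - 2 * ((∫ s in Set.Icc (t - θ - h) t, (K θ * g s) • ω s) ⬝ᵥ R *ᵥ b)
        + (a ⬝ᵥ R *ᵥ a) * (∫ s in Set.Icc (t - θ - h) t, K θ)
        + (2 * (a ⬝ᵥ R *ᵥ b)) * (∫ s in Set.Icc (t - θ - h) t, K θ * g s))
        (Set.Ici (0:ℝ)) := o1234.add o5
    have f2 : (∫ θ in Set.Ici (0:ℝ),
          2 * ((∫ s in Set.Icc (t - θ - h) t, K θ • ω s) ⬝ᵥ R *ᵥ a))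
        = 2 * (V ⬝ᵥ R *ᵥ a) := by
      rw [integral_const_mul]
      congr 1
      exact (dRc R a).integral_comp_comm hKω_out
    have f3 : (∫ θ in Set.Ici (0:ℝ),
          2 * ((∫ s in Set.Icc (t - θ - h) t, (K θ * g s) • ω s) ⬝ᵥ R *ᵥ b))
        = 2 * (Sg ⬝ᵥ R *ᵥ b) := by
      rw [integral_const_mul]
      congr 1
      exact (dRc R b).integral_comp_comm hKgω_out
    have f4 : (∫ θ in Set.Ici (0:ℝ),
          (a ⬝ᵥ R *ᵥ a) * (∫ s in Set.Icc (t - θ - h) t, K θ))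
        = (a ⬝ᵥ R *ᵥ a) * K1h := by rw [integral_const_mul, hIK_int]
    have f5 : (∫ θ in Set.Ici (0:ℝ),
          (2 * (a ⬝ᵥ R *ᵥ b)) * (∫ s in Set.Icc (t - θ - h) t, K θ * g s))
        = (2 * (a ⬝ᵥ R *ᵥ b)) * 0 := by rw [integral_const_mul, hKg0]
    have f6 : (∫ θ in Set.Ici (0:ℝ),
          (b ⬝ᵥ R *ᵥ b) * (∫ s in Set.Icc (t - θ - h) t, K θ * (g s) ^ 2))
        = (b ⬝ᵥ R *ᵥ b) * G2 := by rw [integral_const_mul]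
    rw [setIntegral_congr_fun measurableSet_Ici inner_eq]
    rw [integral_add o12345 o6,
      integral_add o1234 o5,
      integral_add o123 o4,
      integral_sub o12 o3, integral_sub hKωRω_out o2, f2, f3, f4, f5, f6]
  rw [key] at h0
  -- algebra: substitute a = K1h⁻¹ • V, b = G2⁻¹ • Sg
  set q : ℝ := V ⬝ᵥ R *ᵥ V with hq_def
  set p : ℝ := Sg ⬝ᵥ R *ᵥ Sg with hp_def
  have eVa : V ⬝ᵥ R *ᵥ a = K1h⁻¹ * q := by
    rw [ha_def, Matrix.mulVec_smul, dotProduct_smul, smul_eq_mul, hq_def]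
  have eSb : Sg ⬝ᵥ R *ᵥ b = G2⁻¹ * p := by
    rw [hb_def, Matrix.mulVec_smul, dotProduct_smul, smul_eq_mul, hp_def]
  have eaa : a ⬝ᵥ R *ᵥ a = K1h⁻¹ * (K1h⁻¹ * q) := by
    rw [ha_def, smul_dotProduct, Matrix.mulVec_smul, dotProduct_smul,
      smul_eq_mul, smul_eq_mul, hq_def]
  have ebb : b ⬝ᵥ R *ᵥ b = G2⁻¹ * (G2⁻¹ * p) := by
    rw [hb_def, smul_dotProduct, Matrix.mulVec_smul, dotProduct_smul,
      smul_eq_mul, smul_eq_mul, hp_def]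
  rw [eVa, eSb, eaa, ebb] at h0
  have c1 : K1h⁻¹ * K1h = 1 := inv_mul_cancel₀ hK1ne
  have c2 : G2⁻¹ * G2 = 1 := inv_mul_cancel₀ hG2ne
  have e1 : K1h⁻¹ * (K1h⁻¹ * q) * K1h = K1h⁻¹ * q := by
    calc K1h⁻¹ * (K1h⁻¹ * q) * K1h = (K1h⁻¹ * K1h) * (K1h⁻¹ * q) := by ring
    _ = K1h⁻¹ * q := by rw [c1, one_mul]
  have e2 : G2⁻¹ * (G2⁻¹ * p) * G2 = G2⁻¹ * p := by
    calc G2⁻¹ * (G2⁻¹ * p) * G2 = (G2⁻¹ * G2) * (G2⁻¹ * p) := by ring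
    _ = G2⁻¹ * p := by rw [c2, one_mul]
  rw [e1, e2, mul_zero, add_zero] at h0
  show IR ≥ K1h⁻¹ * q + G2⁻¹ * p
  linarith
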